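/- For every odd prime p, the polynomial f_p is the minimal polynomial over ℚ of the real algebraic number 2·cos(2π/p) − 2. -/

import Mathlib

noncomputable section

open Polynomial

/-- `ψ^i(X) := Σ_{j=1}^{i} (C(i,j)·C(i+j−1,j)/C(2j−1,j))·X^j ∈ ℚ[X]`; `ψ^0 = 0`. -/
def psiPoly (i : ℕ) : ℚ[X] :=
  ∑ j ∈ Finset.Icc 1 i,
    C (((i.choose j : ℚ) * ((i + j - 1).choose j : ℚ)) / ((2 * j - 1).choose j : ℚ)) * X ^ j

/-- For odd `n ≥ 3`,
`f_n(X) := n + Σ_{j=1}^{(n−3)/2} (n·(n²−1²)·(n²−3²)⋯(n²−(2j−1)²)/(2^{2j}·(2j+1)!))·X^j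
  + X^{(n−1)/2} ∈ ℚ[X]`. -/
def fPoly (n : ℕ) : ℚ[X] :=
  C (n : ℚ) +
    ∑ j ∈ Finset.Icc 1 ((n - 3) / 2),
      C (((n : ℚ) * ∏ i ∈ Finset.Icc 1 j, ((n : ℚ) ^ 2 - (2 * (i : ℚ) - 1) ^ 2)) /
          (2 ^ (2 * j) * ((2 * j + 1).factorial : ℚ))) * X ^ j +
    X ^ ((n - 1) / 2)

/-- `(X+2)/2 ∈ ℚ[X]`. -/
def halfXAddTwo : ℚ[X] := C (1 / 2 : ℚ) * (X + 2)

namespace FPolyAux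

/-- The `j`-th coefficient of `f_x`, as a function of a rational parameter `x`. -/
def aQ (x : ℚ) (j : ℕ) : ℚ :=
  (x * ∏ i ∈ Finset.Icc 1 j, (x ^ 2 - (2 * (i : ℚ) - 1) ^ 2)) /
    (2 ^ (2 * j) * ((2 * j + 1).factorial : ℚ))

lemma aQ_zero (x : ℚ) : aQ x 0 = x := by
  simp [aQ]

lemma prod_shift (x : ℚ) (j : ℕ) :
    ∏ i ∈ Finset.Icc 1 (j + 1), ((x + 2) ^ 2 - (2 * (i : ℚ) - 1) ^ 2) =
      (∏ i ∈ Finset.Icc 1 j, (x ^ 2 - (2 * (i : ℚ) - 1) ^ 2)) *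
        ((x + 2 * j + 1) * (x + 2 * j + 3)) := by
  induction j with
  | zero => simp; ring
  | succ j ih =>
      rw [Finset.prod_Icc_succ_top (by omega), ih,
        Finset.prod_Icc_succ_top (by omega : 1 ≤ j + 1)]
      push_cast
      ring

lemma prod_shift_neg (x : ℚ) (j : ℕ) :
    ∏ i ∈ Finset.Icc 1 (j + 1), ((x - 2) ^ 2 - (2 * (i : ℚ) - 1) ^ 2) =
      (∏ i ∈ Finset.Icc 1 j, (x ^ 2 - (2 * (i : ℚ) - 1) ^ 2)) *
        ((x - 2 * j - 1) * (x - 2 * j - 3)) := by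
  induction j with
  | zero => simp; ring
  | succ j ih =>
      rw [Finset.prod_Icc_succ_top (by omega), ih,
        Finset.prod_Icc_succ_top (by omega : 1 ≤ j + 1)]
      push_cast
      ring

lemma fact_cast (j : ℕ) :
    ((2 * (j + 1) + 1).factorial : ℚ) =
      (2 * j + 3) * ((2 * j + 2) * ((2 * j + 1).factorial : ℚ)) := by
  rw [show 2 * (j + 1) + 1 = (2 * j + 1) + 1 + 1 by ring, Nat.factorial_succ,
    Nat.factorial_succ]
  push_cast
  ring

/-- The fundamental three-term recurrence for the coefficients. -/
lemma aQ_rec (x : ℚ) (j : ℕ) :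
    aQ (x + 2) (j + 1) = 2 * aQ x (j + 1) + aQ x j - aQ (x - 2) (j + 1) := by
  have hf : ((2 * j + 1).factorial : ℚ) ≠ 0 := by
    exact_mod_cast (Nat.factorial_pos _).ne'
  unfold aQ
  rw [prod_shift, prod_shift_neg, Finset.prod_Icc_succ_top (by omega : 1 ≤ j + 1),
    fact_cast]
  push_cast
  field_simp
  ring

lemma aQ_eq_zero {m j : ℕ} (h : m + 1 ≤ j) : aQ (2 * m + 1 : ℚ) j = 0 := by
  unfold aQ
  rw [Finset.prod_eq_zero (i := m + 1) (by simp; omega)]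
  · simp
  · push_cast; ring

lemma num_eq (m : ℕ) :
    ((2 * m + 1 : ℚ)) * ∏ i ∈ Finset.Icc 1 m, ((2 * m + 1 : ℚ) ^ 2 - (2 * (i : ℚ) - 1) ^ 2) =
      2 ^ (2 * m) * ((2 * m + 1).factorial : ℚ) := by
  induction m with
  | zero => simp
  | succ m ih =>
      have key := prod_shift (2 * (m : ℚ) + 1) m
      have hprod : ∏ i ∈ Finset.Icc 1 (m + 1), ((2 * ((m : ℚ) + 1) + 1) ^ 2 - (2 * (i : ℚ) - 1) ^ 2)
          = (∏ i ∈ Finset.Icc 1 m, ((2 * (m : ℚ) + 1) ^ 2 - (2 * (i : ℚ) - 1) ^ 2)) *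
            (((2 * (m : ℚ) + 1) + 2 * m + 1) * ((2 * (m : ℚ) + 1) + 2 * m + 3)) := by
        rw [← key]
        apply Finset.prod_congr rfl
        intros i _
        ring_nf
      have h0 : (2 * (m : ℚ) + 1) ≠ 0 := by positivity
      apply mul_left_cancel₀ h0
      rw [fact_cast]
      push_cast [hprod]
      linear_combination ((2 * (m : ℚ) + 3) * ((4 * m + 2) * (4 * m + 4))) * ih

lemma aQ_one (m : ℕ) : aQ (2 * m + 1 : ℚ) m = 1 := by
  have hd : (2 ^ (2 * m) * ((2 * m + 1).factorial : ℚ)) ≠ 0 := by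
    have : ((2 * m + 1).factorial : ℚ) ≠ 0 := by exact_mod_cast (Nat.factorial_pos _).ne'
    positivity
  rw [aQ, num_eq, div_self hd]

/-- The power-series form of `fPoly`. -/
def FP (n : ℕ) : ℚ[X] := ∑ j ∈ Finset.range n, C (aQ n j) * X ^ j

lemma aeval_FP (n : ℕ) (v : ℝ) :
    (aeval v) (FP n) = ∑ j ∈ Finset.range n, (aQ n j : ℝ) * v ^ j := by
  simp [FP]

lemma aQ_cast_zero {n j : ℕ} (hodd : Odd n) (h : n ≤ j) : aQ (n : ℚ) j = 0 := by
  obtain ⟨m, rfl⟩ := hodd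
  have h2 : ((2 * m + 1 : ℕ) : ℚ) = 2 * (m : ℚ) + 1 := by push_cast; ring
  rw [h2]
  exact aQ_eq_zero (by omega)

lemma aQ_cast_one {m : ℕ} : aQ ((2 * m + 1 : ℕ) : ℚ) m = 1 := by
  have h2 : ((2 * m + 1 : ℕ) : ℚ) = 2 * (m : ℚ) + 1 := by push_cast; ring
  rw [h2]; exact aQ_one m

lemma key (n : ℕ) (hodd : Odd n) (v : ℝ) :
    (aeval v) (FP (n + 4)) = (v + 2) * (aeval v) (FP (n + 2)) - (aeval v) (FP n) := by
  have h2 : Odd (n + 2) := by obtain ⟨m, rfl⟩ := hodd; exact ⟨m + 1, by ring⟩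
  have h4 : Odd (n + 4) := by obtain ⟨m, rfl⟩ := hodd; exact ⟨m + 2, by ring⟩
  have hpad : ∀ (k : ℕ), Odd k → k ≤ n + 4 →
      (aeval v) (FP k) = ∑ j ∈ Finset.range (n + 4), (aQ k j : ℝ) * v ^ j := by
    intro k hk hkle
    rw [aeval_FP]
    apply Finset.sum_subset (Finset.range_subset_range.2 hkle)
    intro j _ hj
    rw [aQ_cast_zero hk (by simpa using hj)]
    simp
  rw [hpad n hodd (by omega), hpad (n + 2) h2 (by omega), hpad (n + 4) h4 le_rfl]
  have hrec : ∀ j : ℕ, (aQ ((n + 4 : ℕ) : ℚ) (j + 1) : ℝ)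
      = 2 * (aQ ((n + 2 : ℕ) : ℚ) (j + 1) : ℝ) + (aQ ((n + 2 : ℕ) : ℚ) j : ℝ)
        - (aQ ((n : ℕ) : ℚ) (j + 1) : ℝ) := by
    intro j
    have h := aQ_rec ((n : ℚ) + 2) j
    rw [show (n : ℚ) + 2 - 2 = (n : ℚ) by ring] at h
    have e1 : ((n + 4 : ℕ) : ℚ) = (n : ℚ) + 2 + 2 := by push_cast; ring
    have e2 : ((n + 2 : ℕ) : ℚ) = (n : ℚ) + 2 := by push_cast; ring
    rw [e1, e2, h]
    push_cast
    ring
  have hz0 : (aQ ((n + 4 : ℕ) : ℚ) 0 : ℝ) = (n : ℝ) + 4 := by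
    rw [aQ_zero]; push_cast; ring
  have hz2 : (aQ ((n + 2 : ℕ) : ℚ) 0 : ℝ) = (n : ℝ) + 2 := by
    rw [aQ_zero]; push_cast; ring
  have hzn : (aQ ((n : ℕ) : ℚ) 0 : ℝ) = (n : ℝ) := by
    rw [aQ_zero]; push_cast; ring
  have htop : (aQ ((n + 2 : ℕ) : ℚ) (n + 3) : ℝ) = 0 := by
    rw [aQ_cast_zero h2 (by omega)]; simp
  rw [Finset.sum_range_succ' (fun j => (aQ ((n + 4 : ℕ) : ℚ) j : ℝ) * v ^ j) (n + 3),
    Finset.sum_range_succ' (fun j => (aQ ((n + 2 : ℕ) : ℚ) j : ℝ) * v ^ j) (n + 3),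
    Finset.sum_range_succ' (fun j => (aQ ((n : ℕ) : ℚ) j : ℝ) * v ^ j) (n + 3)]
  simp only [hrec, pow_zero, mul_one, hz0, hz2, hzn]
  have hmid : ∑ j ∈ Finset.range (n + 3), (aQ ((n + 2 : ℕ) : ℚ) j : ℝ) * v ^ (j + 1)
      = v * (∑ j ∈ Finset.range (n + 3), (aQ ((n + 2 : ℕ) : ℚ) (j + 1) : ℝ) * v ^ (j + 1)
          + ((n : ℝ) + 2)) := by
    have h1 : ∑ j ∈ Finset.range (n + 3), (aQ ((n + 2 : ℕ) : ℚ) j : ℝ) * v ^ (j + 1)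
        = v * ∑ j ∈ Finset.range (n + 3), (aQ ((n + 2 : ℕ) : ℚ) j : ℝ) * v ^ j := by
      rw [Finset.mul_sum]
      exact Finset.sum_congr rfl fun j _ => by ring
    rw [h1]
    congr 1
    have hs1 := Finset.sum_range_succ (fun j => (aQ ((n + 2 : ℕ) : ℚ) j : ℝ) * v ^ j) (n + 3)
    have hs2 := Finset.sum_range_succ' (fun j => (aQ ((n + 2 : ℕ) : ℚ) j : ℝ) * v ^ j) (n + 3)
    simp only [htop, zero_mul, add_zero, pow_zero, mul_one, hz2] at hs1 hs2
    rw [← hs1, hs2]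
  have hsplit : ∑ j ∈ Finset.range (n + 3),
        ((2 * (aQ ((n + 2 : ℕ) : ℚ) (j + 1) : ℝ) + (aQ ((n + 2 : ℕ) : ℚ) j : ℝ)
          - (aQ ((n : ℕ) : ℚ) (j + 1) : ℝ)) * v ^ (j + 1))
      = 2 * (∑ j ∈ Finset.range (n + 3), (aQ ((n + 2 : ℕ) : ℚ) (j + 1) : ℝ) * v ^ (j + 1))
        + (∑ j ∈ Finset.range (n + 3), (aQ ((n + 2 : ℕ) : ℚ) j : ℝ) * v ^ (j + 1))
        - (∑ j ∈ Finset.range (n + 3), (aQ ((n : ℕ) : ℚ) (j + 1) : ℝ) * v ^ (j + 1)) := by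
    rw [Finset.mul_sum, ← Finset.sum_add_distrib, ← Finset.sum_sub_distrib]
    exact Finset.sum_congr rfl fun j _ => by ring
  rw [hsplit, hmid]
  ring

/-- The statement `f_n(-4 sin² u)·sin u = sin (n u)`. -/
def S (n : ℕ) : Prop :=
  ∀ u : ℝ, (aeval (-4 * Real.sin u ^ 2) (FP n)) * Real.sin u = Real.sin (n * u)

lemma S_one : S 1 := by
  intro u
  rw [aeval_FP]
  simp [aQ_zero]

lemma S_three : S 3 := by
  intro u
  rw [aeval_FP]
  have h0 : aQ ((3 : ℕ) : ℚ) 0 = 3 := by rw [aQ_zero]; norm_num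
  have h1 : aQ ((3 : ℕ) : ℚ) 1 = 1 := by
    rw [aQ]
    norm_num [Nat.factorial]
  have h2 : aQ ((3 : ℕ) : ℚ) 2 = 0 := by
    have : ((3 : ℕ) : ℚ) = 2 * (1 : ℕ) + 1 := by norm_num
    rw [this]
    exact aQ_eq_zero (by norm_num)
  rw [Finset.sum_range_succ, Finset.sum_range_succ, Finset.sum_range_succ, h0, h1, h2]
  have := Real.sin_three_mul u
  push_cast
  rw [this]
  ring

lemma S_step (n : ℕ) (hodd : Odd n) (h1 : S n) (h2 : S (n + 2)) : S (n + 4) := by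
  intro u
  rw [key n hodd]
  have hA := Real.sin_add (((n : ℝ) + 2) * u) (2 * u)
  have hB := Real.sin_sub (((n : ℝ) + 2) * u) (2 * u)
  have hc := Real.cos_two_mul u
  have hs := Real.sin_sq_add_cos_sq u
  have e4 : ((n + 4 : ℕ) : ℝ) * u = ((n : ℝ) + 2) * u + 2 * u := by push_cast; ring
  have e2 : ((n + 2 : ℕ) : ℝ) * u = ((n : ℝ) + 2) * u := by push_cast; ring
  have e0 : ((n : ℕ) : ℝ) * u = ((n : ℝ) + 2) * u - 2 * u := by push_cast; ring
  have hh1 := h1 u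
  have hh2 := h2 u
  rw [e0, hB] at hh1
  rw [e2] at hh2
  rw [e4, hA]
  linear_combination (-4 * Real.sin u ^ 2 + 2) * hh2 - hh1
    + (-2 * Real.sin (((n : ℝ) + 2) * u)) * hc + (-4 * Real.sin (((n : ℝ) + 2) * u)) * hs

lemma S_all (m : ℕ) : S (2 * m + 1) ∧ S (2 * m + 3) := by
  induction m with
  | zero => exact ⟨S_one, S_three⟩
  | succ m ih =>
      constructor
      · rw [show 2 * (m + 1) + 1 = 2 * m + 3 by ring]; exact ih.2
      · rw [show 2 * (m + 1) + 3 = (2 * m + 1) + 4 by ring]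
        exact S_step _ ⟨m, by ring⟩ ih.1 ih.2

lemma fPoly_eq_FP (m : ℕ) (hm : 1 ≤ m) : fPoly (2 * m + 1) = FP (2 * m + 1) := by
  have hzero : ∀ j ∈ Finset.Ico (m + 1) (2 * m + 1),
      C (aQ ((2 * m + 1 : ℕ) : ℚ) j) * X ^ j = 0 := by
    intro j hj
    simp only [Finset.mem_Ico] at hj
    have h2 : ((2 * m + 1 : ℕ) : ℚ) = 2 * (m : ℚ) + 1 := by push_cast; ring
    rw [h2, aQ_eq_zero hj.1]
    simp
  have split1 : FP (2 * m + 1)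
      = ∑ j ∈ Finset.range (m + 1), C (aQ ((2 * m + 1 : ℕ) : ℚ) j) * X ^ j := by
    rw [FP, Finset.range_eq_Ico,
      ← Finset.sum_Ico_consecutive _ (by omega : 0 ≤ m + 1) (by omega : m + 1 ≤ 2 * m + 1),
      Finset.sum_eq_zero hzero, add_zero, ← Finset.range_eq_Ico]
  rw [split1, Finset.sum_range_succ, aQ_cast_one]
  rw [Finset.range_eq_Ico, Finset.sum_eq_sum_Ico_succ_bot (by omega : 0 < m)]
  rw [fPoly]
  have e1 : (2 * m + 1 - 3) / 2 = m - 1 := by omega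
  have e2 : (2 * m + 1 - 1) / 2 = m := by omega
  have e3 : Finset.Icc 1 (m - 1) = Finset.Ico 1 m := by
    rw [← Finset.Ico_add_one_right_eq_Icc]
    congr 1
    omega
  rw [e1, e2, e3]
  have e4 : C ((2 * m + 1 : ℕ) : ℚ) = C (aQ ((2 * m + 1 : ℕ) : ℚ) 0) * X ^ 0 := by
    rw [aQ_zero]; simp
  rw [e4, map_one, one_mul, zero_add]
  rfl

lemma fPoly_monic (m : ℕ) (hm : 1 ≤ m) :
    (fPoly (2 * m + 1)).Monic ∧ (fPoly (2 * m + 1)).natDegree = m := by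
  have e2 : (2 * m + 1 - 1) / 2 = m := by omega
  rw [fPoly, e2, add_comm]
  set q : ℚ[X] := C ((2 * m + 1 : ℕ) : ℚ) +
    ∑ j ∈ Finset.Icc 1 ((2 * m + 1 - 3) / 2),
      C ((((2 * m + 1 : ℕ) : ℚ) *
          ∏ i ∈ Finset.Icc 1 j, (((2 * m + 1 : ℕ) : ℚ) ^ 2 - (2 * (i : ℚ) - 1) ^ 2)) /
          (2 ^ (2 * j) * ((2 * j + 1).factorial : ℚ))) * X ^ j with hqdef
  have hq : degree q < (m : ℕ) := by
    rw [hqdef]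
    apply lt_of_le_of_lt (degree_add_le _ _)
    apply max_lt
    · apply lt_of_le_of_lt degree_C_le
      exact_mod_cast WithBot.coe_lt_coe.2 hm
    · apply lt_of_le_of_lt (degree_sum_le _ _)
      rw [Finset.sup_lt_iff (by exact WithBot.bot_lt_coe m)]
      intro j hj
      simp only [Finset.mem_Icc] at hj
      apply lt_of_le_of_lt (degree_C_mul_X_pow_le _ _)
      exact_mod_cast WithBot.coe_lt_coe.2 (by omega : j < m)
  constructor
  · exact monic_X_pow_add hq
  · have := degree_add_eq_left_of_degree_lt
      (by rwa [degree_X_pow] : degree q < degree ((X : ℚ[X]) ^ m))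
    rw [natDegree, this, degree_X_pow]
    rfl

open IntermediateField in
set_option maxHeartbeats 1000000 in
set_option synthInstance.maxHeartbeats 200000 in
lemma deg_bound (p : ℕ) (hp : p.Prime) (α : ℝ) (fp : ℚ[X]) (hmon : fp.Monic)
    (hα : aeval α fp = 0)
    (hcos : (algebraMap ℝ ℂ α) + 2 = 2 * Complex.cos ((2 * Real.pi / p : ℝ) : ℂ)) :
    p - 1 ≤ 2 * (minpoly ℚ α).natDegree := by
  set β : ℂ := algebraMap ℝ ℂ α with hβ
  have hminβ : minpoly ℚ β = minpoly ℚ α :=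
    minpoly.algebraMap_eq (algebraMap ℝ ℂ).injective α
  have hαint : IsIntegral ℚ α := ⟨fp, hmon, hα⟩
  have hβint : IsIntegral ℚ β := hαint.map (IsScalarTower.toAlgHom ℚ ℝ ℂ)
  set ζ : ℂ := Complex.exp (2 * Real.pi * Complex.I / p) with hζ
  have hprim : IsPrimitiveRoot ζ p := Complex.isPrimitiveRoot_exp p hp.ne_zero
  have hζint : IsIntegral ℚ ζ := (hprim.isIntegral hp.pos).tower_top
  have hminζ : (minpoly ℚ ζ).natDegree = p - 1 := by
    rw [← cyclotomic_eq_minpoly_rat hprim hp.pos, natDegree_cyclotomic,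
      Nat.totient_prime hp]
  set θc : ℂ := ((2 * Real.pi / p : ℝ) : ℂ) with hθc
  have hθ : ζ = Complex.cos θc + Complex.sin θc * Complex.I := by
    rw [← Complex.exp_mul_I, hζ, hθc]
    congr 1
    push_cast
    ring_nf
  have hrel : ζ ^ 2 - (β + 2) * ζ + 1 = 0 := by
    rw [hθ, hcos]
    have hsq := Complex.sin_sq_add_cos_sq θc
    linear_combination (Complex.sin θc ^ 2) * Complex.I_sq - hsq
  set K : IntermediateField ℚ ℂ := ℚ⟮β⟯ with hK
  haveI : FiniteDimensional ℚ K := IntermediateField.adjoin.finiteDimensional hβint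
  have hfinK : Module.finrank ℚ K = (minpoly ℚ α).natDegree := by
    rw [← hminβ]; exact IntermediateField.adjoin.finrank hβint
  have hζK : IsIntegral K ζ := hζint.tower_top
  set L : IntermediateField K ℂ := K⟮ζ⟯ with hL
  haveI : FiniteDimensional K L := IntermediateField.adjoin.finiteDimensional hζK
  set γ : K := AdjoinSimple.gen ℚ β + 2 with hγdef
  have hγ : (algebraMap K ℂ) γ = β + 2 := rfl
  have hLdeg : Module.finrank K L ≤ 2 := by
    rw [hL, IntermediateField.adjoin.finrank hζK]
    have haev : (aeval ζ) (X ^ 2 - C γ * X + 1 : K[X]) = 0 := by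
      simp only [map_add, map_sub, map_pow, map_one, map_mul, aeval_X, aeval_C, aeval_one]
      rw [hγ]
      exact hrel
    have hq2 : (X ^ 2 - C γ * X + 1 : K[X]).natDegree = 2 := by
      compute_degree!
    have hqne : (X ^ 2 - C γ * X + 1 : K[X]) ≠ 0 := by
      intro h
      rw [h] at hq2
      simp at hq2
    calc (minpoly K ζ).natDegree ≤ _ := natDegree_le_of_dvd (minpoly.dvd _ _ haev) hqne
    _ = 2 := hq2
  haveI : FiniteDimensional ℚ L := Module.Finite.trans K L
  have htower : Module.finrank ℚ L = Module.finrank ℚ K * Module.finrank K L :=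
    (Module.finrank_mul_finrank ℚ K L).symm
  have hup : (minpoly ℚ ζ).natDegree ≤ Module.finrank ℚ L := by
    have hζL : ζ ∈ L := by rw [hL]; exact mem_adjoin_simple_self K ζ
    have h1 := minpoly.natDegree_le (A := ℚ) (⟨ζ, hζL⟩ : L)
    have h2 : minpoly ℚ ((algebraMap L ℂ) (⟨ζ, hζL⟩ : L)) = minpoly ℚ (⟨ζ, hζL⟩ : L) :=
      minpoly.algebraMap_eq (algebraMap L ℂ).injective _
    rw [show (algebraMap L ℂ) (⟨ζ, hζL⟩ : L) = ζ from rfl] at h2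
    rw [← h2] at h1
    exact h1
  rw [hminζ, htower, hfinK] at hup
  calc p - 1 ≤ (minpoly ℚ α).natDegree * Module.finrank K L := hup
  _ ≤ (minpoly ℚ α).natDegree * 2 := Nat.mul_le_mul_left _ hLdeg
  _ = 2 * (minpoly ℚ α).natDegree := by ring

end FPolyAux

open FPolyAux in
/-- For every odd prime `p`, `f_p` is the minimal polynomial over `ℚ` of
the real algebraic number `2·cos(2π/p) − 2`. -/
theorem fPoly_eq_minpoly (p : ℕ) (hp : p.Prime) (hodd : Odd p) :
    minpoly ℚ (2 * Real.cos (2 * Real.pi / p) - 2) = fPoly p := by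
  obtain ⟨m, hpm⟩ := hodd
  have hm1 : 1 ≤ m := by have := hp.two_le; omega
  have hpm' : p = 2 * m + 1 := by omega
  subst hpm'
  set α : ℝ := 2 * Real.cos (2 * Real.pi / (2 * m + 1 : ℕ)) - 2 with hα
  have hppos : (0 : ℝ) < ((2 * m + 1 : ℕ) : ℝ) := by
    exact_mod_cast hp.pos
  -- α is a root of fPoly
  have hαv : α = -4 * Real.sin (Real.pi / (2 * m + 1 : ℕ)) ^ 2 := by
    have hc := Real.cos_two_mul (Real.pi / (2 * m + 1 : ℕ))
    have hs := Real.sin_sq_add_cos_sq (Real.pi / (2 * m + 1 : ℕ))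
    rw [hα, show 2 * Real.pi / ((2 * m + 1 : ℕ) : ℝ) = 2 * (Real.pi / (2 * m + 1 : ℕ)) by ring]
    linear_combination 2 * hc + 4 * hs
  have hroot : aeval α (fPoly (2 * m + 1)) = 0 := by
    have hS := (S_all m).1 (Real.pi / (2 * m + 1 : ℕ))
    have harg : ((2 * m + 1 : ℕ) : ℝ) * (Real.pi / (2 * m + 1 : ℕ)) = Real.pi := by
      field_simp
    rw [harg, Real.sin_pi] at hS
    have hsin : Real.sin (Real.pi / (2 * m + 1 : ℕ)) ≠ 0 := by
      apply ne_of_gt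
      apply Real.sin_pos_of_pos_of_lt_pi
      · positivity
      · apply div_lt_self Real.pi_pos
        exact_mod_cast hp.one_lt
    rw [fPoly_eq_FP m hm1, hαv]
    exact (mul_eq_zero.1 hS).resolve_right hsin
  obtain ⟨hmon, hdeg⟩ := fPoly_monic m hm1
  have hint : IsIntegral ℚ α := ⟨fPoly (2 * m + 1), hmon, hroot⟩
  have hdvd : minpoly ℚ α ∣ fPoly (2 * m + 1) := minpoly.dvd ℚ α hroot
  have hcos : (algebraMap ℝ ℂ α) + 2
      = 2 * Complex.cos ((2 * Real.pi / (2 * m + 1 : ℕ) : ℝ) : ℂ) := by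
    rw [hα]
    simp only [Complex.coe_algebraMap, Complex.ofReal_sub, Complex.ofReal_mul,
      Complex.ofReal_ofNat, Complex.ofReal_cos]
    ring
  have hlow := deg_bound (2 * m + 1) hp α (fPoly (2 * m + 1)) hmon hroot hcos
  have hdegle : (fPoly (2 * m + 1)).natDegree ≤ (minpoly ℚ α).natDegree := by
    rw [hdeg]
    omega
  exact (eq_of_monic_of_dvd_of_natDegree_le (minpoly.monic hint) hmon hdvd hdegle).symm
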